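/- Let $f(s) = \sum a_n n^{-s}$ and $g(s) = \sum b_n n^{-s}$ be Dirichlet series with nonnegative coefficients, with summatory functions $A(T) = \sum_{n\le T} a_n$ and $B(T) = \sum_{n\le T} b_n$. Suppose $A(T) = O(T^i)$ and $B(T) = cT^k + O(T^j)$ with $i \le j < k$. Let $c_n = \sum_{pq=n} a_p b_q$ and $C(T) = \sum_{n \le T} c_n$. Then $C(T) = c\, f(k)\, T^k + O(T^j \log T)$ if $i = j$, and $C(T) = c\, f(k)\, T^k + O(T^j)$ if $i < j$. -/

import Mathlib

open Finset Real

lemma swap_sum (a b : ℕ → ℝ) (N : ℕ) :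
    ∑ n ∈ Finset.Icc 1 N, ∑ d ∈ n.divisors, a d * b (n / d)
      = ∑ d ∈ Finset.Icc 1 N, a d * ∑ m ∈ Finset.Icc 1 (N / d), b m := by
  have h1 : ∀ n ∈ Finset.Icc 1 N, ∑ d ∈ n.divisors, a d * b (n / d)
      = ∑ p ∈ n.divisorsAntidiagonal, a p.1 * b p.2 := by
    intro n hn
    rw [Nat.sum_divisorsAntidiagonal (f := fun x y => a x * b y)]
  rw [Finset.sum_congr rfl h1]
  rw [Finset.sum_sigma']
  have h2 : ∀ d ∈ Finset.Icc 1 N, a d * ∑ m ∈ Finset.Icc 1 (N / d), b m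
      = ∑ m ∈ Finset.Icc 1 (N / d), a d * b m := by
    intro d _; rw [Finset.mul_sum]
  rw [Finset.sum_congr rfl h2, Finset.sum_sigma']
  apply Finset.sum_nbij' (fun p => ⟨p.2.1, p.2.2⟩) (fun p => ⟨p.1 * p.2, p.1, p.2⟩)
  · rintro ⟨n, d, m⟩ h
    simp only [Finset.mem_sigma, Finset.mem_Icc, Nat.mem_divisorsAntidiagonal] at h ⊢
    obtain ⟨⟨h1n, h2n⟩, hdm, hn0⟩ := h
    have hd1 : 1 ≤ d := Nat.one_le_iff_ne_zero.2 (fun h0 => hn0 (by simp [← hdm, h0]))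
    have hm1 : 1 ≤ m := Nat.one_le_iff_ne_zero.2 (fun h0 => hn0 (by simp [← hdm, h0]))
    refine ⟨⟨hd1, le_trans (Nat.le_of_dvd (by omega) ⟨m, hdm.symm⟩) h2n⟩, hm1, ?_⟩
    exact Nat.le_div_iff_mul_le (by omega) |>.2 (by rw [mul_comm]; omega)
  · rintro ⟨d, m⟩ h
    simp only [Finset.mem_sigma, Finset.mem_Icc, Nat.mem_divisorsAntidiagonal] at h ⊢
    obtain ⟨⟨hd1, hdN⟩, hm1, hmN⟩ := h
    have : d * m ≤ N := by rw [mul_comm]; exact (Nat.le_div_iff_mul_le (by omega)).1 hmN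
    exact ⟨⟨Nat.one_le_iff_ne_zero.2 (by positivity), this⟩, trivial, by positivity⟩
  · rintro ⟨n, d, m⟩ h
    simp only [Finset.mem_sigma, Nat.mem_divisorsAntidiagonal] at h
    simp [h.2.1]
  · rintro ⟨d, m⟩ _; rfl
  · rintro ⟨n, d, m⟩ _; rfl

lemma cast_two_pow (m : ℕ) : ((2^m : ℕ) : ℝ) = (2:ℝ) ^ ((m : ℕ) : ℝ) := by
  push_cast
  rw [Real.rpow_natCast]

lemma dyadic_decomp (f : ℕ → ℝ) (P Q : ℕ) (h : P ≤ Q) :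
    ∑ d ∈ Finset.Ioc (2^P) (2^Q), f d
      = ∑ r ∈ Finset.Ico P Q, ∑ d ∈ Finset.Ioc (2^r) (2^(r+1)), f d := by
  induction Q, h using Nat.le_induction with
  | base => simp
  | succ Q hPQ ih =>
    rw [← Finset.sum_Ioc_consecutive (fun d => f d)
      (Nat.pow_le_pow_right (by norm_num) hPQ) (Nat.pow_le_pow_right (by norm_num) Q.le_succ),
      ih, Finset.sum_Ico_succ_top hPQ]

lemma block_bound (a : ℕ → ℝ) (ha : ∀ n, 0 ≤ a n) (i t K : ℝ) (hK : 0 ≤ K)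
    (hA : ∀ N : ℕ, 1 ≤ N → ∑ n ∈ Finset.Icc 1 N, a n ≤ K * (N : ℝ) ^ i) (r : ℕ) :
    ∑ d ∈ Finset.Ioc (2^r) (2^(r+1)), a d * (d : ℝ) ^ t
      ≤ (K * max 1 ((2:ℝ) ^ t) * (2:ℝ) ^ i) * (2:ℝ) ^ ((r : ℝ) * (i + t)) := by
  set c₁ : ℝ := (2:ℝ) ^ ((r:ℝ) * t) * max 1 ((2:ℝ) ^ t) with hc₁
  have hc₁0 : 0 ≤ c₁ := by positivity
  have key : ∀ d ∈ Finset.Ioc (2^r) (2^(r+1)), a d * (d:ℝ) ^ t ≤ a d * c₁ := by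
    intro d hd
    simp only [Finset.mem_Ioc] at hd
    refine mul_le_mul_of_nonneg_left ?_ (ha d)
    rcases le_or_gt 0 t with ht | ht
    · calc (d:ℝ) ^ t ≤ ((2^(r+1) : ℕ) : ℝ) ^ t := by
            apply Real.rpow_le_rpow (Nat.cast_nonneg d) (by exact_mod_cast hd.2) ht
        _ = ((2:ℝ) ^ (((r+1:ℕ)):ℝ)) ^ t := by rw [cast_two_pow]
        _ = (2:ℝ) ^ ((r:ℝ) * t) * (2:ℝ) ^ t := by
            rw [← Real.rpow_mul (by norm_num),
              show (((r+1:ℕ)):ℝ) * t = (r:ℝ)*t + t by push_cast; ring,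
              Real.rpow_add two_pos]
        _ ≤ c₁ := by
            rw [hc₁]
            exact mul_le_mul_of_nonneg_left (le_max_right _ _) (by positivity)
    · calc (d:ℝ) ^ t ≤ ((2^r : ℕ) : ℝ) ^ t := by
            apply Real.rpow_le_rpow_of_nonpos (by positivity) ?_ ht.le
            exact_mod_cast hd.1.le
        _ = (2:ℝ) ^ ((r:ℝ) * t) := by
            rw [cast_two_pow, ← Real.rpow_mul (by norm_num)]
        _ ≤ c₁ := le_mul_of_one_le_right (by positivity) (le_max_left _ _)
  calc ∑ d ∈ Finset.Ioc (2^r) (2^(r+1)), a d * (d:ℝ) ^ t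
      ≤ ∑ d ∈ Finset.Ioc (2^r) (2^(r+1)), a d * c₁ := Finset.sum_le_sum key
    _ = (∑ d ∈ Finset.Ioc (2^r) (2^(r+1)), a d) * c₁ := by rw [← Finset.sum_mul]
    _ ≤ (∑ d ∈ Finset.Icc 1 (2^(r+1)), a d) * c₁ := by
        apply mul_le_mul_of_nonneg_right _ hc₁0
        apply Finset.sum_le_sum_of_subset_of_nonneg
        · intro x hx
          simp only [Finset.mem_Ioc, Finset.mem_Icc] at hx ⊢
          omega
        · intro x _ _; exact ha x
    _ ≤ (K * ((2^(r+1):ℕ) : ℝ) ^ i) * c₁ := by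
        apply mul_le_mul_of_nonneg_right (hA _ Nat.one_le_two_pow) hc₁0
    _ = (K * max 1 ((2:ℝ) ^ t) * (2:ℝ) ^ i) * (2:ℝ) ^ ((r : ℝ) * (i + t)) := by
        rw [cast_two_pow, ← Real.rpow_mul (by norm_num), hc₁,
          show (((r+1:ℕ)):ℝ) * i = (r:ℝ)*i + i by push_cast; ring,
          show (r:ℝ) * (i+t) = (r:ℝ)*i + (r:ℝ)*t by ring,
          Real.rpow_add two_pos, Real.rpow_add two_pos]
        ring

lemma geom_bound {q : ℝ} (h0 : 0 ≤ q) (h1 : q < 1) (M : ℕ) :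
    ∑ r ∈ Finset.range M, q ^ r ≤ (1 - q)⁻¹ := by
  calc ∑ r ∈ Finset.range M, q ^ r ≤ ∑' r : ℕ, q ^ r :=
        Summable.sum_le_tsum _ (fun r _ => pow_nonneg h0 r) (summable_geometric_of_lt_one h0 h1)
    _ = (1 - q)⁻¹ := tsum_geometric_of_lt_one h0 h1

lemma S_bound (a : ℕ → ℝ) (ha : ∀ n, 0 ≤ a n) (i t K : ℝ) (hK : 0 ≤ K)
    (hA : ∀ N : ℕ, 1 ≤ N → ∑ n ∈ Finset.Icc 1 N, a n ≤ K * (N : ℝ) ^ i)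
    (N : ℕ) (hN : 1 ≤ N) :
    ∑ d ∈ Finset.Icc 1 N, a d * (d : ℝ) ^ t
      ≤ a 1 + (K * max 1 ((2:ℝ) ^ t) * (2:ℝ) ^ i) *
          ∑ r ∈ Finset.range (Nat.log 2 N + 1), (2:ℝ) ^ ((r : ℝ) * (i + t)) := by
  set M := Nat.log 2 N with hM
  have hN2 : N ≤ 2 ^ (M + 1) := (Nat.lt_pow_succ_log_self (by norm_num) N).le
  have step1 : ∑ d ∈ Finset.Icc 1 N, a d * (d : ℝ) ^ t
      ≤ ∑ d ∈ Finset.Icc 1 (2^(M+1)), a d * (d : ℝ) ^ t := by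
    apply Finset.sum_le_sum_of_subset_of_nonneg
    · exact Finset.Icc_subset_Icc_right hN2
    · intro x _ _; exact mul_nonneg (ha x) (Real.rpow_nonneg (Nat.cast_nonneg x) t)
  have step2 : ∑ d ∈ Finset.Icc 1 (2^(M+1)), a d * (d : ℝ) ^ t
      = a 1 + ∑ d ∈ Finset.Ioc 1 (2^(M+1)), a d * (d : ℝ) ^ t := by
    rw [Finset.Icc_eq_cons_Ioc Nat.one_le_two_pow, Finset.sum_cons]
    norm_num
  have step3 : ∑ d ∈ Finset.Ioc 1 (2^(M+1)), a d * (d : ℝ) ^ t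
      ≤ (K * max 1 ((2:ℝ) ^ t) * (2:ℝ) ^ i) *
          ∑ r ∈ Finset.range (M + 1), (2:ℝ) ^ ((r : ℝ) * (i + t)) := by
    have : (Finset.Ioc 1 (2^(M+1)) : Finset ℕ) = Finset.Ioc (2^0) (2^(M+1)) := by norm_num
    rw [this, dyadic_decomp _ _ _ (Nat.zero_le _), Finset.mul_sum]
    have : Finset.Ico 0 (M+1) = Finset.range (M+1) := by
      rw [Finset.range_eq_Ico]
    rw [this]
    exact Finset.sum_le_sum (fun r _ => block_bound a ha i t K hK hA r)
  linarith

lemma rpow_mul_nat (u : ℝ) (r : ℕ) : (2:ℝ) ^ ((r : ℝ) * u) = ((2:ℝ) ^ u) ^ r := by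
  rw [mul_comm, Real.rpow_mul (by norm_num), Real.rpow_natCast]

lemma S_bound_lt (a : ℕ → ℝ) (ha : ∀ n, 0 ≤ a n) (i t K : ℝ) (hK : 0 ≤ K)
    (hA : ∀ N : ℕ, 1 ≤ N → ∑ n ∈ Finset.Icc 1 N, a n ≤ K * (N : ℝ) ^ i)
    (hit : i + t < 0) (N : ℕ) (hN : 1 ≤ N) :
    ∑ d ∈ Finset.Icc 1 N, a d * (d : ℝ) ^ t
      ≤ a 1 + (K * max 1 ((2:ℝ) ^ t) * (2:ℝ) ^ i) * (1 - (2:ℝ) ^ (i + t))⁻¹ := by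
  have hq0 : (0:ℝ) ≤ (2:ℝ) ^ (i + t) := (Real.rpow_pos_of_pos two_pos _).le
  have hq1 : (2:ℝ) ^ (i + t) < 1 := Real.rpow_lt_one_of_one_lt_of_neg (by norm_num) hit
  refine (S_bound a ha i t K hK hA N hN).trans ?_
  have hsum : ∑ r ∈ Finset.range (Nat.log 2 N + 1), (2:ℝ) ^ ((r : ℝ) * (i + t))
      ≤ (1 - (2:ℝ) ^ (i + t))⁻¹ := by
    simp_rw [rpow_mul_nat]; exact geom_bound hq0 hq1 _
  have hC : (0:ℝ) ≤ K * max 1 ((2:ℝ) ^ t) * (2:ℝ) ^ i := by positivity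
  nlinarith [mul_le_mul_of_nonneg_left hsum hC]

lemma S_bound_eq (a : ℕ → ℝ) (ha : ∀ n, 0 ≤ a n) (i t K : ℝ) (hK : 0 ≤ K)
    (hA : ∀ N : ℕ, 1 ≤ N → ∑ n ∈ Finset.Icc 1 N, a n ≤ K * (N : ℝ) ^ i)
    (hit : i + t = 0) (N : ℕ) (hN : 1 ≤ N) :
    ∑ d ∈ Finset.Icc 1 N, a d * (d : ℝ) ^ t
      ≤ a 1 + (K * max 1 ((2:ℝ) ^ t) * (2:ℝ) ^ i) * ((Nat.log 2 N : ℝ) + 1) := by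
  refine (S_bound a ha i t K hK hA N hN).trans ?_
  have hsum : ∑ r ∈ Finset.range (Nat.log 2 N + 1), (2:ℝ) ^ ((r : ℝ) * (i + t))
      = (Nat.log 2 N : ℝ) + 1 := by
    rw [hit]
    simp only [mul_zero, Real.rpow_zero, Finset.sum_const, Finset.card_range, nsmul_eq_mul,
      mul_one]
    push_cast; ring
  rw [hsum]

lemma tail_bound (a : ℕ → ℝ) (ha : ∀ n, 0 ≤ a n) (i k K : ℝ) (hK : 0 ≤ K)
    (hA : ∀ N : ℕ, 1 ≤ N → ∑ n ∈ Finset.Icc 1 N, a n ≤ K * (N : ℝ) ^ i)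
    (hik : i < k) (N L : ℕ) (hN : 1 ≤ N) :
    ∑ d ∈ Finset.Ioc N L, a d * (d : ℝ) ^ (-k)
      ≤ ((K * max 1 ((2:ℝ) ^ (-k)) * (2:ℝ) ^ i) * ((1 - (2:ℝ) ^ (i - k))⁻¹ * (2:ℝ) ^ (k - i)))
          * (N : ℝ) ^ (i - k) := by
  set C₀ : ℝ := K * max 1 ((2:ℝ) ^ (-k)) * (2:ℝ) ^ i with hC₀
  have hC₀0 : 0 ≤ C₀ := by positivity
  have hq0 : (0:ℝ) ≤ (2:ℝ) ^ (i - k) := (Real.rpow_pos_of_pos two_pos _).le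
  have hq1 : (2:ℝ) ^ (i - k) < 1 :=
    Real.rpow_lt_one_of_one_lt_of_neg (by norm_num) (by linarith)
  rcases le_or_gt L N with hLN | hLN
  · rw [Finset.Ioc_eq_empty (by omega), Finset.sum_empty]
    have h1q : (0:ℝ) < 1 - (2:ℝ) ^ (i - k) := by linarith
    exact mul_nonneg (mul_nonneg hC₀0 (mul_nonneg (inv_nonneg.2 h1q.le)
      (Real.rpow_pos_of_pos two_pos _).le)) (Real.rpow_nonneg (Nat.cast_nonneg N) _)
  · set R₀ := Nat.log 2 N with hR₀
    set M := Nat.log 2 L with hMdef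
    have hRM : R₀ ≤ M := Nat.log_mono_right hLN.le
    have h1 : (2:ℕ) ^ R₀ ≤ N := Nat.pow_log_le_self 2 (by omega)
    have h2 : L ≤ 2 ^ (M + 1) := (Nat.lt_pow_succ_log_self (by norm_num) L).le
    have hsub : Finset.Ioc N L ⊆ Finset.Ioc (2^R₀) (2^(M+1)) := by
      apply Finset.Ioc_subset_Ioc h1 h2
    have step1 : ∑ d ∈ Finset.Ioc N L, a d * (d : ℝ) ^ (-k)
        ≤ ∑ d ∈ Finset.Ioc (2^R₀) (2^(M+1)), a d * (d : ℝ) ^ (-k) := by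
      apply Finset.sum_le_sum_of_subset_of_nonneg hsub
      intro x _ _; exact mul_nonneg (ha x) (Real.rpow_nonneg (Nat.cast_nonneg x) _)
    rw [dyadic_decomp _ _ _ (by omega)] at step1
    have step2 : ∑ r ∈ Finset.Ico R₀ (M+1), ∑ d ∈ Finset.Ioc (2^r) (2^(r+1)), a d * (d:ℝ) ^ (-k)
        ≤ ∑ r ∈ Finset.Ico R₀ (M+1), C₀ * (2:ℝ) ^ ((r : ℝ) * (i + -k)) :=
      Finset.sum_le_sum (fun r _ => block_bound a ha i (-k) K hK hA r)
    have step3 : ∑ r ∈ Finset.Ico R₀ (M+1), C₀ * (2:ℝ) ^ ((r : ℝ) * (i + -k))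
        ≤ C₀ * (((2:ℝ) ^ (i - k)) ^ R₀ * (1 - (2:ℝ) ^ (i - k))⁻¹) := by
      rw [← Finset.mul_sum]
      apply mul_le_mul_of_nonneg_left _ hC₀0
      have : ∀ r : ℕ, (2:ℝ) ^ ((r : ℝ) * (i + -k)) = ((2:ℝ) ^ (i - k)) ^ r := by
        intro r; rw [show i + -k = i - k by ring, rpow_mul_nat]
      simp_rw [this]
      rw [Finset.sum_Ico_eq_sum_range]
      simp_rw [pow_add, ← Finset.mul_sum]  -- q^(R₀+r) = q^R₀ * q^r
      exact mul_le_mul_of_nonneg_left (geom_bound hq0 hq1 _) (pow_nonneg hq0 _)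
    have step4 : ((2:ℝ) ^ (i - k)) ^ R₀ ≤ (2:ℝ) ^ (k - i) * (N : ℝ) ^ (i - k) := by
      have hNR : (N : ℝ) / 2 ≤ (2:ℝ) ^ (R₀ : ℝ) := by
        have : N < 2 ^ (R₀ + 1) := Nat.lt_pow_succ_log_self (by norm_num) N
        have : (N:ℝ) < 2 * ((2:ℕ)^R₀ : ℕ) := by
          push_cast; exact_mod_cast by push_cast [pow_succ] at this ⊢; linarith
        rw [cast_two_pow] at this
        linarith
      calc ((2:ℝ) ^ (i - k)) ^ R₀ = ((2:ℝ) ^ (R₀:ℝ)) ^ (i - k) := by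
            rw [← rpow_mul_nat, Real.rpow_mul (by norm_num : (0:ℝ) ≤ 2)]
        _ ≤ ((N : ℝ) / 2) ^ (i - k) := by
            have hN0 : (0:ℝ) < (N:ℝ) := by exact_mod_cast hN
            apply Real.rpow_le_rpow_of_nonpos (by positivity) hNR (by linarith)
        _ = (2:ℝ) ^ (k - i) * (N : ℝ) ^ (i - k) := by
            rw [Real.div_rpow (Nat.cast_nonneg N) (by norm_num), div_eq_mul_inv,
              ← Real.rpow_neg (by norm_num), neg_sub]
            ring
    calc ∑ d ∈ Finset.Ioc N L, a d * (d : ℝ) ^ (-k)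
        ≤ C₀ * (((2:ℝ) ^ (i - k)) ^ R₀ * (1 - (2:ℝ) ^ (i - k))⁻¹) := by linarith
      _ ≤ C₀ * ((2:ℝ) ^ (k - i) * (N : ℝ) ^ (i - k) * (1 - (2:ℝ) ^ (i - k))⁻¹) := by
          apply mul_le_mul_of_nonneg_left _ hC₀0
          apply mul_le_mul_of_nonneg_right step4 (inv_nonneg.2 (by linarith))
      _ = (C₀ * ((1 - (2:ℝ) ^ (i - k))⁻¹ * (2:ℝ) ^ (k - i))) * (N : ℝ) ^ (i - k) := by ring

section gsec
variable (a : ℕ → ℝ) (k : ℝ)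

noncomputable def gg : ℕ → ℝ := fun n => if 1 ≤ n then a n * (n : ℝ) ^ (-k) else 0

lemma gg_nonneg (ha : ∀ n, 0 ≤ a n) (n : ℕ) : 0 ≤ gg a k n := by
  unfold gg
  split
  · exact mul_nonneg (ha n) (Real.rpow_nonneg (Nat.cast_nonneg n) _)
  · exact le_refl 0

lemma sum_gg_Icc (N : ℕ) : ∑ n ∈ Finset.Icc 1 N, gg a k n
    = ∑ n ∈ Finset.Icc 1 N, a n * (n : ℝ) ^ (-k) := by
  apply Finset.sum_congr rfl
  intro n hn
  rw [Finset.mem_Icc] at hn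
  exact if_pos hn.1

lemma sum_gg_Ioc (N L : ℕ) : ∑ n ∈ Finset.Ioc N L, gg a k n
    = ∑ n ∈ Finset.Ioc N L, a n * (n : ℝ) ^ (-k) := by
  apply Finset.sum_congr rfl
  intro n hn
  rw [Finset.mem_Ioc] at hn
  exact if_pos (by omega)

lemma sum_gg_range (m : ℕ) : ∑ n ∈ Finset.range m, gg a k n
    = ∑ n ∈ Finset.Icc 1 (m - 1), gg a k n := by
  symm
  apply Finset.sum_subset
  · intro x hx
    rw [Finset.mem_Icc] at hx
    rw [Finset.mem_range]
    omega
  · intro x hx hx'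
    rw [Finset.mem_range] at hx
    rw [Finset.mem_Icc] at hx'
    have : x = 0 := by omega
    simp [gg, this]

lemma gg_summable (ha : ∀ n, 0 ≤ a n) (i K : ℝ) (hK : 0 ≤ K)
    (hA : ∀ N : ℕ, 1 ≤ N → ∑ n ∈ Finset.Icc 1 N, a n ≤ K * (N : ℝ) ^ i)
    (hik : i < k) : Summable (gg a k) := by
  apply summable_of_sum_range_le (c := a 1 +
    (K * max 1 ((2:ℝ) ^ (-k)) * (2:ℝ) ^ i) * (1 - (2:ℝ) ^ (i + -k))⁻¹) (gg_nonneg a k ha)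
  intro m
  rw [sum_gg_range, sum_gg_Icc]
  rcases Nat.lt_or_ge (m - 1) 1 with h | h
  · have h0 : m - 1 = 0 := by omega
    rw [h0]
    have hlt : (2:ℝ) ^ (i + -k) < 1 :=
      Real.rpow_lt_one_of_one_lt_of_neg (by norm_num) (by linarith)
    have h2 : (0:ℝ) < 1 - (2:ℝ) ^ (i + -k) := by linarith
    have h3 : (0:ℝ) ≤ (K * max 1 ((2:ℝ) ^ (-k)) * (2:ℝ) ^ i) * (1 - (2:ℝ) ^ (i + -k))⁻¹ := by
      positivity
    rw [show Finset.Icc 1 0 = (∅ : Finset ℕ) from by simp, Finset.sum_empty]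
    linarith [ha 1]
  · exact S_bound_lt a ha i (-k) K hK hA (by linarith) _ h
end gsec

lemma tsum_tail_bound (a : ℕ → ℝ) (k : ℝ) (ha : ∀ n, 0 ≤ a n) (i K : ℝ) (hK : 0 ≤ K)
    (hA : ∀ N : ℕ, 1 ≤ N → ∑ n ∈ Finset.Icc 1 N, a n ≤ K * (N : ℝ) ^ i)
    (hik : i < k) (N : ℕ) (hN : 1 ≤ N) :
    0 ≤ (∑' n, gg a k n) - ∑ n ∈ Finset.Icc 1 N, gg a k n ∧
    (∑' n, gg a k n) - ∑ n ∈ Finset.Icc 1 N, gg a k n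
      ≤ ((K * max 1 ((2:ℝ) ^ (-k)) * (2:ℝ) ^ i) * ((1 - (2:ℝ) ^ (i - k))⁻¹ * (2:ℝ) ^ (k - i)))
          * (N : ℝ) ^ (i - k) := by
  have hsum := gg_summable a k ha i K hK hA hik
  have key := Summable.sum_add_tsum_nat_add (f := gg a k) (N + 1) hsum
  have hr : ∑ n ∈ Finset.range (N + 1), gg a k n = ∑ n ∈ Finset.Icc 1 N, gg a k n := by
    rw [sum_gg_range]; norm_num
  have hdiff : (∑' n, gg a k n) - ∑ n ∈ Finset.Icc 1 N, gg a k n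
      = ∑' m, gg a k (m + (N + 1)) := by
    rw [← hr, ← key]; ring
  have hshift : Summable (fun m => gg a k (m + (N + 1))) := (summable_nat_add_iff (N+1)).2 hsum
  rw [hdiff]
  constructor
  · exact tsum_nonneg (fun m => gg_nonneg a k ha _)
  · apply Summable.tsum_le_of_sum_le hshift
    intro s
    have himg : ∑ m ∈ s, gg a k (m + (N + 1))
        = ∑ d ∈ s.image (fun m => m + (N + 1)), gg a k d := by
      rw [Finset.sum_image]
      intro x _ y _ h
      simp only at h
      omega
    rw [himg]
    have hsub : s.image (fun m => m + (N + 1)) ⊆ Finset.Ioc N (s.sup id + N + 1) := by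
      intro d hd
      rw [Finset.mem_image] at hd
      obtain ⟨m, hm, rfl⟩ := hd
      rw [Finset.mem_Ioc]
      exact ⟨by omega, by have := Finset.le_sup (f := id) hm; simp only [id] at this; omega⟩
    calc ∑ d ∈ s.image (fun m => m + (N + 1)), gg a k d
        ≤ ∑ d ∈ Finset.Ioc N (s.sup id + N + 1), gg a k d :=
          Finset.sum_le_sum_of_subset_of_nonneg hsub (fun x _ _ => gg_nonneg a k ha x)
      _ = ∑ d ∈ Finset.Ioc N (s.sup id + N + 1), a d * (d:ℝ) ^ (-k) := sum_gg_Ioc a k _ _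
      _ ≤ _ := tail_bound a ha i k K hK hA hik N _ hN

lemma rpow_le_max {x y e : ℝ} (hx : 1 ≤ x) (hxy : x ≤ y) : x ^ e ≤ max 1 (y ^ e) := by
  rcases le_or_gt 0 e with he | he
  · exact le_max_of_le_right (Real.rpow_le_rpow (by linarith) hxy he)
  · exact le_max_of_le_left (Real.rpow_le_one_of_one_le_of_nonpos hx he.le)

lemma min_le_rpow {x y e : ℝ} (hx : 1 ≤ x) (hxy : x ≤ y) : min 1 (y ^ e) ≤ x ^ e := by
  rcases le_or_gt 0 e with he | he
  · exact min_le_of_left_le (Real.one_le_rpow hx he)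
  · exact min_le_of_right_le (Real.rpow_le_rpow_of_nonpos (by linarith) hxy he.le)

lemma min_rpow_pos {y e : ℝ} (hy : 0 < y) : 0 < min 1 (y ^ e) :=
  lt_min one_pos (Real.rpow_pos_of_pos hy e)

open Filter Asymptotics in
lemma global_bound_of_isBigO {F : ℝ → ℝ} {e : ℝ}
    (h : F =O[atTop] fun x : ℝ => x ^ e)
    (hloc : ∀ y : ℝ, 1 ≤ y → ∃ D : ℝ, 0 ≤ D ∧ ∀ x : ℝ, 1 ≤ x → x ≤ y → |F x| ≤ D) :
    ∃ M : ℝ, 0 < M ∧ ∀ x : ℝ, 1 ≤ x → |F x| ≤ M * x ^ e := by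
  rw [isBigO_iff] at h
  obtain ⟨C, hC⟩ := h
  rw [eventually_atTop] at hC
  obtain ⟨x₀, hx₀⟩ := hC
  set x₁ := max x₀ 1 with hx₁
  have hx₁1 : 1 ≤ x₁ := le_max_right _ _
  obtain ⟨D, hD0, hD⟩ := hloc x₁ hx₁1
  set m := min 1 (x₁ ^ e) with hm
  have hm0 : 0 < m := min_rpow_pos (by linarith)
  refine ⟨max C 0 + D / m + 1, by positivity, ?_⟩
  intro x hx
  have hxe : 0 < x ^ e := Real.rpow_pos_of_pos (by linarith) e
  rcases le_or_gt x₁ x with hcase | hcase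
  · have := hx₀ x (le_trans (le_max_left _ _) hcase)
    have this' : |F x| ≤ C * |x ^ e| := this
    rw [abs_of_pos hxe] at this'
    have h2 : C * x ^ e ≤ (max C 0 + D / m + 1) * x ^ e := by
      apply mul_le_mul_of_nonneg_right _ hxe.le
      have : 0 ≤ D / m := by positivity
      linarith [le_max_left C (0:ℝ), le_max_right C (0:ℝ)]
    calc |F x| ≤ C * x ^ e := this'
      _ ≤ _ := h2
  · have h1 : |F x| ≤ D := hD x hx hcase.le
    have h2 : m ≤ x ^ e := min_le_rpow hx hcase.le
    calc |F x| ≤ D := h1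
      _ = (D / m) * m := by field_simp
      _ ≤ (D / m) * x ^ e := mul_le_mul_of_nonneg_left h2 (by positivity)
      _ ≤ (max C 0 + D / m + 1) * x ^ e := by
          apply mul_le_mul_of_nonneg_right _ hxe.le
          have : (0:ℝ) ≤ max C 0 := le_max_right _ _
          linarith

lemma div_rpow_eq {T : ℝ} (hT : 0 ≤ T) (d : ℕ) (e : ℝ) :
    (T / (d:ℝ)) ^ e = T ^ e * (d:ℝ) ^ (-e) := by
  rw [Real.div_rpow hT (Nat.cast_nonneg d), Real.rpow_neg (Nat.cast_nonneg d), div_eq_mul_inv]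

lemma main_est (a b : ℕ → ℝ) (ha : ∀ n, 0 ≤ a n) (hb : ∀ n, 0 ≤ b n)
    (i j k c : ℝ) (hik : i < k)
    (KA : ℝ) (hKA : 0 ≤ KA)
    (hAn : ∀ N : ℕ, 1 ≤ N → ∑ n ∈ Finset.Icc 1 N, a n ≤ KA * (N : ℝ) ^ i)
    (MB : ℝ) (hMB : 0 ≤ MB)
    (hBg : ∀ x : ℝ, 1 ≤ x →
      |(∑ n ∈ Finset.Icc 1 ⌊x⌋₊, b n) - c * x ^ k| ≤ MB * x ^ j)
    (T : ℝ) (hT : 1 ≤ T) :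
    |(∑ n ∈ Finset.Icc 1 ⌊T⌋₊, ∑ d ∈ n.divisors, a d * b (n / d)) -
        c * (∑' n, gg a k n) * T ^ k|
      ≤ MB * T ^ j * (∑ d ∈ Finset.Icc 1 ⌊T⌋₊, a d * (d:ℝ) ^ (-j))
        + (|c| * ((KA * max 1 ((2:ℝ) ^ (-k)) * (2:ℝ) ^ i) *
            ((1 - (2:ℝ) ^ (i - k))⁻¹ * (2:ℝ) ^ (k - i)))) * (T ^ k * (⌊T⌋₊ : ℝ) ^ (i - k)) := by
  set N := ⌊T⌋₊ with hNdef
  have hT0 : (0:ℝ) < T := by linarith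
  have hN1 : 1 ≤ N := Nat.le_floor (by exact_mod_cast hT)
  set Ct : ℝ := (KA * max 1 ((2:ℝ) ^ (-k)) * (2:ℝ) ^ i) *
      ((1 - (2:ℝ) ^ (i - k))⁻¹ * (2:ℝ) ^ (k - i)) with hCt
  set F : ℝ := ∑' n, gg a k n with hF
  set SkN : ℝ := ∑ d ∈ Finset.Icc 1 N, a d * (d:ℝ) ^ (-k) with hSkN
  -- divisor swap and floor identities
  have e1 := swap_sum a b N
  have hdinfo : ∀ d ∈ Finset.Icc 1 N, (1:ℝ) ≤ T / (d:ℝ) ∧ ((d:ℝ)) ≠ 0 ∧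
      N / d = ⌊T / (d:ℝ)⌋₊ := by
    intro d hd
    rw [Finset.mem_Icc] at hd
    have hd0 : (0:ℝ) < (d:ℝ) := by exact_mod_cast hd.1
    have hdT : (d:ℝ) ≤ T := le_trans (by exact_mod_cast hd.2 : (d:ℝ) ≤ (N:ℝ))
      (Nat.floor_le hT0.le)
    exact ⟨(one_le_div hd0).2 hdT, hd0.ne', (Nat.floor_div_natCast T d).symm⟩
  -- decomposition
  have decomp : (∑ n ∈ Finset.Icc 1 N, ∑ d ∈ n.divisors, a d * b (n / d)) - c * F * T ^ k
      = (∑ d ∈ Finset.Icc 1 N,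
          a d * ((∑ m ∈ Finset.Icc 1 ⌊T / (d:ℝ)⌋₊, b m) - c * (T / (d:ℝ)) ^ k))
        + c * T ^ k * (SkN - F) := by
    rw [e1]
    have : ∀ d ∈ Finset.Icc 1 N, a d * ∑ m ∈ Finset.Icc 1 (N / d), b m
        = a d * ((∑ m ∈ Finset.Icc 1 ⌊T / (d:ℝ)⌋₊, b m) - c * (T / (d:ℝ)) ^ k)
          + c * T ^ k * (a d * (d:ℝ) ^ (-k)) := by
      intro d hd
      obtain ⟨h1, h2, h3⟩ := hdinfo d hd
      rw [← h3, div_rpow_eq hT0.le d k]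
      ring
    rw [Finset.sum_congr rfl this, Finset.sum_add_distrib, ← Finset.mul_sum, ← hSkN]
    ring
  rw [decomp]
  -- bound the two pieces
  have hb1 : |∑ d ∈ Finset.Icc 1 N,
      a d * ((∑ m ∈ Finset.Icc 1 ⌊T / (d:ℝ)⌋₊, b m) - c * (T / (d:ℝ)) ^ k)|
      ≤ MB * T ^ j * (∑ d ∈ Finset.Icc 1 N, a d * (d:ℝ) ^ (-j)) := by
    calc |∑ d ∈ Finset.Icc 1 N,
        a d * ((∑ m ∈ Finset.Icc 1 ⌊T / (d:ℝ)⌋₊, b m) - c * (T / (d:ℝ)) ^ k)|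
        ≤ ∑ d ∈ Finset.Icc 1 N,
            |a d * ((∑ m ∈ Finset.Icc 1 ⌊T / (d:ℝ)⌋₊, b m) - c * (T / (d:ℝ)) ^ k)| :=
          Finset.abs_sum_le_sum_abs _ _
      _ ≤ ∑ d ∈ Finset.Icc 1 N, a d * (MB * T ^ j * (d:ℝ) ^ (-j)) := by
          apply Finset.sum_le_sum
          intro d hd
          obtain ⟨h1, h2, h3⟩ := hdinfo d hd
          rw [abs_mul, abs_of_nonneg (ha d)]
          have := hBg (T / (d:ℝ)) h1
          calc a d * |(∑ m ∈ Finset.Icc 1 ⌊T / (d:ℝ)⌋₊, b m) - c * (T / (d:ℝ)) ^ k|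
              ≤ a d * (MB * (T / (d:ℝ)) ^ j) := mul_le_mul_of_nonneg_left this (ha d)
            _ = a d * (MB * T ^ j * (d:ℝ) ^ (-j)) := by rw [div_rpow_eq hT0.le d j]; ring
      _ = MB * T ^ j * (∑ d ∈ Finset.Icc 1 N, a d * (d:ℝ) ^ (-j)) := by
          rw [Finset.mul_sum]
          apply Finset.sum_congr rfl
          intro d _; ring
  have htail := tsum_tail_bound a k ha i KA hKA hAn hik N hN1
  rw [← sum_gg_Icc] at hSkN
  have htail' : |SkN - F| ≤ (KA * max 1 ((2:ℝ) ^ (-k)) * (2:ℝ) ^ i) *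
      ((1 - (2:ℝ) ^ (i - k))⁻¹ * (2:ℝ) ^ (k - i)) * (N:ℝ) ^ (i - k) := by
    rw [hSkN, hF, abs_sub_comm]
    rw [abs_of_nonneg htail.1]
    exact htail.2
  have hb2 : |c * T ^ k * (SkN - F)| ≤ (|c| * Ct) * (T ^ k * (N:ℝ) ^ (i - k)) := by
    rw [abs_mul, abs_mul]
    have hTk : |T ^ k| = T ^ k := abs_of_pos (Real.rpow_pos_of_pos hT0 k)
    rw [hTk]
    calc |c| * T ^ k * |SkN - F| ≤ |c| * T ^ k * (Ct * (N:ℝ) ^ (i - k)) := by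
          apply mul_le_mul_of_nonneg_left _ (by positivity)
          exact htail'
      _ = (|c| * Ct) * (T ^ k * (N:ℝ) ^ (i - k)) := by ring
  calc |(∑ d ∈ Finset.Icc 1 N,
        a d * ((∑ m ∈ Finset.Icc 1 ⌊T / (d:ℝ)⌋₊, b m) - c * (T / (d:ℝ)) ^ k))
      + c * T ^ k * (SkN - F)|
      ≤ |∑ d ∈ Finset.Icc 1 N,
          a d * ((∑ m ∈ Finset.Icc 1 ⌊T / (d:ℝ)⌋₊, b m) - c * (T / (d:ℝ)) ^ k)|
        + |c * T ^ k * (SkN - F)| := abs_add_le _ _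
    _ ≤ _ := add_le_add hb1 hb2

lemma tk_bound {i k : ℝ} (hik : i < k) (T : ℝ) (hT : 1 ≤ T) :
    T ^ k * ((⌊T⌋₊ : ℝ)) ^ (i - k) ≤ (2:ℝ) ^ (k - i) * T ^ i := by
  have hT0 : (0:ℝ) < T := by linarith
  have hN1 : 1 ≤ ⌊T⌋₊ := Nat.le_floor (by exact_mod_cast hT)
  have hhalf : T / 2 ≤ (⌊T⌋₊ : ℝ) := by
    rcases le_or_gt 2 T with h | h
    · have h2 := Nat.lt_floor_add_one T
      have h3 : (⌊T⌋₊ : ℝ) > T - 1 := by linarith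
      linarith
    · have : (1:ℝ) ≤ (⌊T⌋₊ : ℝ) := by exact_mod_cast hN1
      linarith
  have step1 : ((⌊T⌋₊ : ℝ)) ^ (i - k) ≤ (T / 2) ^ (i - k) :=
    Real.rpow_le_rpow_of_nonpos (by positivity) hhalf (by linarith)
  have step2 : (T / 2) ^ (i - k) = (2:ℝ) ^ (k - i) * T ^ (i - k) := by
    rw [Real.div_rpow hT0.le (by norm_num), div_eq_mul_inv,
      ← Real.rpow_neg (by norm_num : (0:ℝ) ≤ 2), neg_sub]
    ring
  calc T ^ k * ((⌊T⌋₊ : ℝ)) ^ (i - k) ≤ T ^ k * ((2:ℝ) ^ (k - i) * T ^ (i - k)) := by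
        rw [← step2]
        exact mul_le_mul_of_nonneg_left step1 (Real.rpow_pos_of_pos hT0 k).le
    _ = (2:ℝ) ^ (k - i) * (T ^ k * T ^ (i - k)) := by ring
    _ = (2:ℝ) ^ (k - i) * T ^ i := by
        rw [← Real.rpow_add hT0]
        ring_nf

open Filter Asymptotics

/-- Let `f(s) = ∑ aₙ n^{-s}` and `g(s) = ∑ bₙ n^{-s}` be Dirichlet series with nonnegative
coefficients and summatory functions `A(T) = ∑_{n ≤ T} aₙ`, `B(T) = ∑_{n ≤ T} bₙ`.
Suppose `A(T) = O(T^i)` and `B(T) = cT^k + O(T^j)` with `i ≤ j < k`.  Let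
`cₙ = ∑_{pq = n} a_p b_q` and `C(T) = ∑_{n ≤ T} cₙ`.  Then
`C(T) = c f(k) T^k + O(T^j log T)` if `i = j`, and `C(T) = c f(k) T^k + O(T^j)` if
`i < j`; here `f(k) = ∑ aₙ n^{-k}`. -/
theorem stmt19 (a b : ℕ → ℝ) (ha : ∀ n, 0 ≤ a n) (hb : ∀ n, 0 ≤ b n)
    (i j k c : ℝ) (hij : i ≤ j) (hjk : j < k)
    (hA : (fun T : ℝ => ∑ n ∈ Finset.Icc 1 ⌊T⌋₊, a n) =O[atTop] fun T : ℝ => T ^ i)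
    (hB : (fun T : ℝ => (∑ n ∈ Finset.Icc 1 ⌊T⌋₊, b n) - c * T ^ k)
      =O[atTop] fun T : ℝ => T ^ j) :
    (i = j →
      (fun T : ℝ =>
          (∑ n ∈ Finset.Icc 1 ⌊T⌋₊, ∑ d ∈ n.divisors, a d * b (n / d)) -
            c * (∑' n : ℕ, if 1 ≤ n then a n * (n : ℝ) ^ (-k) else 0) * T ^ k)
        =O[atTop] fun T : ℝ => T ^ j * Real.log T) ∧
    (i < j →
      (fun T : ℝ =>
          (∑ n ∈ Finset.Icc 1 ⌊T⌋₊, ∑ d ∈ n.divisors, a d * b (n / d)) -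
            c * (∑' n : ℕ, if 1 ≤ n then a n * (n : ℝ) ^ (-k) else 0) * T ^ k)
        =O[atTop] fun T : ℝ => T ^ j) := by
  have hik : i < k := lt_of_le_of_lt hij hjk
  -- global bound for A
  obtain ⟨KA, hKA0, hKA⟩ := global_bound_of_isBigO hA (by
    intro y hy
    refine ⟨∑ n ∈ Finset.Icc 1 ⌊y⌋₊, a n, Finset.sum_nonneg (fun n _ => ha n), ?_⟩
    intro x hx hxy
    rw [abs_of_nonneg (Finset.sum_nonneg (fun n _ => ha n))]
    exact Finset.sum_le_sum_of_subset_of_nonneg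
      (Finset.Icc_subset_Icc_right (Nat.floor_mono hxy)) (fun n _ _ => ha n))
  have hAn : ∀ N : ℕ, 1 ≤ N → ∑ n ∈ Finset.Icc 1 N, a n ≤ KA * (N:ℝ) ^ i := by
    intro N hN
    have h1 : (1:ℝ) ≤ (N:ℝ) := by exact_mod_cast hN
    have h2 := hKA (N:ℝ) h1
    rw [Nat.floor_natCast] at h2
    exact (le_abs_self _).trans h2
  -- global bound for B
  obtain ⟨MB, hMB0, hMB⟩ := global_bound_of_isBigO hB (by
    intro y hy
    refine ⟨(∑ n ∈ Finset.Icc 1 ⌊y⌋₊, b n) + |c| * max 1 (y ^ k), ?_, ?_⟩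
    · have h1 : (0:ℝ) ≤ |c| * max 1 (y^k) := by positivity
      have hs : (0:ℝ) ≤ ∑ n ∈ Finset.Icc 1 ⌊y⌋₊, b n := Finset.sum_nonneg (fun n _ => hb n)
      linarith
    · intro x hx hxy
      have hs : |∑ n ∈ Finset.Icc 1 ⌊x⌋₊, b n| ≤ ∑ n ∈ Finset.Icc 1 ⌊y⌋₊, b n := by
        rw [abs_of_nonneg (Finset.sum_nonneg (fun n _ => hb n))]
        exact Finset.sum_le_sum_of_subset_of_nonneg
          (Finset.Icc_subset_Icc_right (Nat.floor_mono hxy)) (fun n _ _ => hb n)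
      have hck : |c * x ^ k| ≤ |c| * max 1 (y ^ k) := by
        rw [abs_mul]
        apply mul_le_mul_of_nonneg_left _ (abs_nonneg c)
        rw [abs_of_pos (Real.rpow_pos_of_pos (by linarith) k)]
        exact rpow_le_max hx hxy
      calc |(∑ n ∈ Finset.Icc 1 ⌊x⌋₊, b n) - c * x ^ k|
          ≤ |∑ n ∈ Finset.Icc 1 ⌊x⌋₊, b n| + |c * x ^ k| := abs_sub _ _
        _ ≤ _ := add_le_add hs hck)
  have hgsum_eq : (∑' n : ℕ, if 1 ≤ n then a n * (n:ℝ)^(-k) else 0) = ∑' n, gg a k n := rfl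
  have hq1 : (2:ℝ) ^ (i - k) < 1 :=
    Real.rpow_lt_one_of_one_lt_of_neg (by norm_num) (by linarith)
  have hq0 : (0:ℝ) < 1 - (2:ℝ) ^ (i - k) := by linarith
  set Ct : ℝ := (KA * max 1 ((2:ℝ) ^ (-k)) * (2:ℝ) ^ i) *
      ((1 - (2:ℝ) ^ (i - k))⁻¹ * (2:ℝ) ^ (k - i)) with hCtdef
  have hCt0 : 0 ≤ Ct := by positivity
  constructor
  · -- case i = j
    intro hijeq
    subst hijeq
    simp only [hgsum_eq]
    set C0j : ℝ := KA * max 1 ((2:ℝ) ^ (-i)) * (2:ℝ) ^ i with hC0j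
    have hC0j0 : 0 ≤ C0j := by positivity
    rw [isBigO_iff]
    refine ⟨MB * (a 1 + C0j * (1 / Real.log 2 + 1)) + (|c| * Ct) * (2:ℝ) ^ (k - i), ?_⟩
    rw [eventually_atTop]
    refine ⟨max (Real.exp 1) 1, ?_⟩
    intro T hT'
    have hT : 1 ≤ T := le_trans (le_max_right _ _) hT'
    have hT0 : (0:ℝ) < T := by linarith
    have hlog : 1 ≤ Real.log T := by
      rw [Real.le_log_iff_exp_le hT0]
      exact le_trans (by simpa using Real.exp_le_exp.2 (le_refl 1)) (le_trans (le_max_left _ _) hT')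
    have hN1 : 1 ≤ ⌊T⌋₊ := Nat.le_floor (by exact_mod_cast hT)
    have hmain := main_est a b ha hb i i k c hik KA hKA0.le hAn MB hMB0.le hMB T hT
    have hSj := S_bound_eq a ha i (-i) KA hKA0.le hAn (by ring) ⌊T⌋₊ hN1
    have htk := tk_bound hik T hT
    have hlog2 : (0:ℝ) < Real.log 2 := Real.log_pos (by norm_num)
    have hlogN : (Nat.log 2 ⌊T⌋₊ : ℝ) ≤ Real.log T / Real.log 2 := by
      have h1 : (((2^(Nat.log 2 ⌊T⌋₊) : ℕ)) : ℝ) ≤ (⌊T⌋₊:ℝ) := by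
        exact_mod_cast Nat.pow_log_le_self 2 (by omega)
      have h2 : (⌊T⌋₊:ℝ) ≤ T := Nat.floor_le hT0.le
      have h3 : Real.log (((2:ℕ)^(Nat.log 2 ⌊T⌋₊) : ℕ) : ℝ) ≤ Real.log T :=
        Real.log_le_log (by positivity) (h1.trans h2)
      rw [show (((2:ℕ)^(Nat.log 2 ⌊T⌋₊) : ℕ) : ℝ) = (2:ℝ)^(Nat.log 2 ⌊T⌋₊) by push_cast; rfl,
        Real.log_pow] at h3
      rw [le_div_iff₀ hlog2]
      exact h3
    set SjN : ℝ := ∑ d ∈ Finset.Icc 1 ⌊T⌋₊, a d * (d:ℝ) ^ (-i) with hSjNdef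
    have hSjN0 : 0 ≤ SjN := Finset.sum_nonneg (fun d _ =>
      mul_nonneg (ha d) (Real.rpow_nonneg (Nat.cast_nonneg d) _))
    have hSj2 : SjN ≤ (a 1 + C0j * (1 / Real.log 2 + 1)) * Real.log T := by
      have h4 : SjN ≤ a 1 + C0j * ((Nat.log 2 ⌊T⌋₊ : ℝ) + 1) := hSj
      have h5 : a 1 + C0j * ((Nat.log 2 ⌊T⌋₊ : ℝ) + 1)
          ≤ a 1 + C0j * (Real.log T / Real.log 2 + 1) := by
        have := mul_le_mul_of_nonneg_left (add_le_add_right hlogN 1) hC0j0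
        linarith
      have h6 : a 1 + C0j * (Real.log T / Real.log 2 + 1)
          ≤ (a 1 + C0j * (1 / Real.log 2 + 1)) * Real.log T := by
        have e1 : a 1 ≤ a 1 * Real.log T :=
          le_mul_of_one_le_right (ha 1) hlog
        have e2 : C0j ≤ C0j * Real.log T := le_mul_of_one_le_right hC0j0 hlog
        have e3 : C0j * (Real.log T / Real.log 2) = (C0j * (1 / Real.log 2)) * Real.log T := by
          ring
        nlinarith [mul_nonneg hC0j0 hlog2.le]
      linarith
    have hTj : (0:ℝ) < T ^ i := Real.rpow_pos_of_pos hT0 i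
    have goal' : |(∑ n ∈ Finset.Icc 1 ⌊T⌋₊, ∑ d ∈ n.divisors, a d * b (n / d)) -
        c * (∑' n, gg a k n) * T ^ k|
        ≤ (MB * (a 1 + C0j * (1 / Real.log 2 + 1)) + (|c| * Ct) * (2:ℝ) ^ (k - i)) *
          (T ^ i * Real.log T) := by
      have s1 : MB * T ^ i * SjN
          ≤ MB * (a 1 + C0j * (1 / Real.log 2 + 1)) * (T ^ i * Real.log T) := by
        have := mul_le_mul_of_nonneg_left hSj2 (mul_nonneg hMB0.le hTj.le)
        calc MB * T ^ i * SjN ≤ MB * T ^ i * ((a 1 + C0j * (1 / Real.log 2 + 1)) * Real.log T) :=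
              this
          _ = MB * (a 1 + C0j * (1 / Real.log 2 + 1)) * (T ^ i * Real.log T) := by ring
      have s2 : (|c| * Ct) * (T ^ k * (⌊T⌋₊ : ℝ) ^ (i - k))
          ≤ ((|c| * Ct) * (2:ℝ) ^ (k - i)) * (T ^ i * Real.log T) := by
        calc (|c| * Ct) * (T ^ k * (⌊T⌋₊ : ℝ) ^ (i - k))
            ≤ (|c| * Ct) * ((2:ℝ) ^ (k - i) * T ^ i) :=
              mul_le_mul_of_nonneg_left htk (by positivity)
          _ = ((|c| * Ct) * (2:ℝ) ^ (k - i)) * (T ^ i * 1) := by ring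
          _ ≤ ((|c| * Ct) * (2:ℝ) ^ (k - i)) * (T ^ i * Real.log T) := by
              apply mul_le_mul_of_nonneg_left _ (by positivity)
              exact mul_le_mul_of_nonneg_left hlog hTj.le
      calc |(∑ n ∈ Finset.Icc 1 ⌊T⌋₊, ∑ d ∈ n.divisors, a d * b (n / d)) -
          c * (∑' n, gg a k n) * T ^ k|
          ≤ MB * T ^ i * SjN + (|c| * Ct) * (T ^ k * (⌊T⌋₊ : ℝ) ^ (i - k)) := hmain
        _ ≤ _ := by linarith
    have habs : |T ^ i * Real.log T| = T ^ i * Real.log T :=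
      abs_of_pos (by positivity)
    show ‖_‖ ≤ _
    rw [Real.norm_eq_abs, Real.norm_eq_abs, habs]
    exact goal'
  · -- case i < j
    intro hijlt
    simp only [hgsum_eq]
    set Cj : ℝ := a 1 + (KA * max 1 ((2:ℝ) ^ (-j)) * (2:ℝ) ^ i) *
        (1 - (2:ℝ) ^ (i + -j))⁻¹ with hCj
    have hqj1 : (2:ℝ) ^ (i + -j) < 1 :=
      Real.rpow_lt_one_of_one_lt_of_neg (by norm_num) (by linarith)
    have hqj0 : (0:ℝ) < 1 - (2:ℝ) ^ (i + -j) := by linarith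
    have hCj0 : 0 ≤ Cj := by
      have : (0:ℝ) ≤ (KA * max 1 ((2:ℝ) ^ (-j)) * (2:ℝ) ^ i) *
          (1 - (2:ℝ) ^ (i + -j))⁻¹ := by positivity
      have := ha 1
      rw [hCj]; linarith
    rw [isBigO_iff]
    refine ⟨MB * Cj + (|c| * Ct) * (2:ℝ) ^ (k - i), ?_⟩
    rw [eventually_atTop]
    refine ⟨1, ?_⟩
    intro T hT
    have hT0 : (0:ℝ) < T := by linarith
    have hN1 : 1 ≤ ⌊T⌋₊ := Nat.le_floor (by exact_mod_cast hT)
    have hmain := main_est a b ha hb i j k c hik KA hKA0.le hAn MB hMB0.le hMB T hT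
    have hSj := S_bound_lt a ha i (-j) KA hKA0.le hAn (by linarith) ⌊T⌋₊ hN1
    have htk := tk_bound hik T hT
    have hTj : (0:ℝ) < T ^ j := Real.rpow_pos_of_pos hT0 j
    have hTi_le : T ^ i ≤ T ^ j := Real.rpow_le_rpow_of_exponent_le hT hijlt.le
    have goal' : |(∑ n ∈ Finset.Icc 1 ⌊T⌋₊, ∑ d ∈ n.divisors, a d * b (n / d)) -
        c * (∑' n, gg a k n) * T ^ k|
        ≤ (MB * Cj + (|c| * Ct) * (2:ℝ) ^ (k - i)) * T ^ j := by
      have s1 : MB * T ^ j * (∑ d ∈ Finset.Icc 1 ⌊T⌋₊, a d * (d:ℝ) ^ (-j))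
          ≤ (MB * Cj) * T ^ j := by
        calc MB * T ^ j * (∑ d ∈ Finset.Icc 1 ⌊T⌋₊, a d * (d:ℝ) ^ (-j))
            ≤ MB * T ^ j * Cj :=
              mul_le_mul_of_nonneg_left hSj (mul_nonneg hMB0.le hTj.le)
          _ = (MB * Cj) * T ^ j := by ring
      have s2 : (|c| * Ct) * (T ^ k * (⌊T⌋₊ : ℝ) ^ (i - k))
          ≤ ((|c| * Ct) * (2:ℝ) ^ (k - i)) * T ^ j := by
        calc (|c| * Ct) * (T ^ k * (⌊T⌋₊ : ℝ) ^ (i - k))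
            ≤ (|c| * Ct) * ((2:ℝ) ^ (k - i) * T ^ i) :=
              mul_le_mul_of_nonneg_left htk (by positivity)
          _ ≤ (|c| * Ct) * ((2:ℝ) ^ (k - i) * T ^ j) := by
              apply mul_le_mul_of_nonneg_left _ (by positivity)
              exact mul_le_mul_of_nonneg_left hTi_le (by positivity)
          _ = ((|c| * Ct) * (2:ℝ) ^ (k - i)) * T ^ j := by ring
      calc |(∑ n ∈ Finset.Icc 1 ⌊T⌋₊, ∑ d ∈ n.divisors, a d * b (n / d)) -
          c * (∑' n, gg a k n) * T ^ k|
          ≤ MB * T ^ j * (∑ d ∈ Finset.Icc 1 ⌊T⌋₊, a d * (d:ℝ) ^ (-j))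
            + (|c| * Ct) * (T ^ k * (⌊T⌋₊ : ℝ) ^ (i - k)) := hmain
        _ ≤ _ := by linarith
    show ‖_‖ ≤ _
    rw [Real.norm_eq_abs, Real.norm_eq_abs, abs_of_pos hTj]
    exact goal'
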